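/- (Lemma B.3, Huang et al.) Let D be a survival dataset of size n ≥ 2 satisfying the covariate bound C_Z for some C_Z > 0. For every β, b ∈ ℝ^d, with η_b := sup_{t ∈ [0,1]} max_{i,j ∈ [n]} |bᵀ(Z_i(t) − Z_j(t))| (which is finite and at most 2 C_Z ‖b‖₂), one has e^{−η_b} · bᵀ H(β;D) b ≤ bᵀ (ℓ̇(β;D) − ℓ̇(β+b;D)) ≤ e^{η_b} · bᵀ H(β;D) b. Moreover, in the Loewner order, e^{−2η_b} H(β;D) ⪯ H(β+b;D) ⪯ e^{2η_b} H(β;D). -/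

import Mathlib

open scoped BigOperators
open MeasureTheory Real
open scoped RealInnerProductSpace
noncomputable section

structure SurvData (n d : ℕ) where
  T : Fin n → ℝ
  Δ : Fin n → Bool
  Z : Fin n → ℝ → EuclideanSpace ℝ (Fin d)

namespace SurvData

variable {n d : ℕ}

/-- Observed times lie in `[0,1]`. -/
def valid (D : SurvData n d) : Prop := ∀ i, D.T i ∈ Set.Icc (0 : ℝ) 1

/-- Covariate bound: `‖Z_i(t)‖₂ ≤ C_Z` for all `i` and all `t ∈ [0,1]`. -/
def covBound (D : SurvData n d) (CZ : ℝ) : Prop :=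
  ∀ i, ∀ t ∈ Set.Icc (0 : ℝ) 1, ‖D.Z i t‖ ≤ CZ

def S0 (D : SurvData n d) (β : EuclideanSpace ℝ (Fin d)) (t : ℝ) : ℝ :=
  (n : ℝ)⁻¹ * ∑ j, if t ≤ D.T j then Real.exp ⟪β, D.Z j t⟫ else 0

def S1 (D : SurvData n d) (β : EuclideanSpace ℝ (Fin d)) (t : ℝ) :
    EuclideanSpace ℝ (Fin d) :=
  (n : ℝ)⁻¹ • ∑ j, if t ≤ D.T j then Real.exp ⟪β, D.Z j t⟫ • D.Z j t else 0

def Zbar (D : SurvData n d) (β : EuclideanSpace ℝ (Fin d)) (t : ℝ) :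
    EuclideanSpace ℝ (Fin d) :=
  (D.S0 β t)⁻¹ • D.S1 β t

/-- The Cox partial-likelihood score `ℓ̇(β; D)`. -/
def score (D : SurvData n d) (β : EuclideanSpace ℝ (Fin d)) :
    EuclideanSpace ℝ (Fin d) :=
  (n : ℝ)⁻¹ • ∑ i, if D.Δ i then D.Z i (D.T i) - D.Zbar β (D.T i) else 0

/-- Neighbouring datasets: they differ in at most one triple. -/
def Neighbor (D D' : SurvData n d) : Prop :=
  ∃ i0 : Fin n, ∀ i, i ≠ i0 → D.T i = D'.T i ∧ D.Δ i = D'.Δ i ∧ D.Z i = D'.Z i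

def S2mat (D : SurvData n d) (β : EuclideanSpace ℝ (Fin d)) (t : ℝ) :
    Matrix (Fin d) (Fin d) ℝ :=
  (n : ℝ)⁻¹ • ∑ j, if t ≤ D.T j then
    Real.exp ⟪β, D.Z j t⟫ • Matrix.of (fun k l => D.Z j t k * D.Z j t l) else 0

def Vmat (D : SurvData n d) (β : EuclideanSpace ℝ (Fin d)) (t : ℝ) :
    Matrix (Fin d) (Fin d) ℝ :=
  (D.S0 β t)⁻¹ • D.S2mat β t - Matrix.of (fun k l => D.Zbar β t k * D.Zbar β t l)

/-- The information matrix `H(β; D)`, i.e. minus the Hessian of the log partial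
likelihood. -/
def infoMat (D : SurvData n d) (β : EuclideanSpace ℝ (Fin d)) :
    Matrix (Fin d) (Fin d) ℝ :=
  (n : ℝ)⁻¹ • ∑ i, if D.Δ i then D.Vmat β (D.T i) else 0

end SurvData

/-- The quadratic form `bᵀ M b`. -/
def quadForm {d : ℕ} (M : Matrix (Fin d) (Fin d) ℝ) (b : EuclideanSpace ℝ (Fin d)) : ℝ :=
  ∑ k, ∑ l, b k * M k l * b l

/-! ### Auxiliary elementary lemmas -/

lemma expLow (u v : ℝ) :
    Real.exp (min u v) * ((u - v) * (u - v)) ≤ (Real.exp u - Real.exp v) * (u - v) := by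
  rcases le_total v u with h | h
  · rw [min_eq_right h]
    have h1 : Real.exp v * (u - v) ≤ Real.exp u - Real.exp v := by
      have := mul_le_mul_of_nonneg_left (Real.add_one_le_exp (u - v)) (Real.exp_pos v).le
      rw [← Real.exp_add] at this
      rw [show v + (u - v) = u from by ring] at this; nlinarith
    nlinarith [mul_le_mul_of_nonneg_right h1 (sub_nonneg.2 h)]
  · rw [min_eq_left h]
    have h1 : Real.exp u * (v - u) ≤ Real.exp v - Real.exp u := by
      have := mul_le_mul_of_nonneg_left (Real.add_one_le_exp (v - u)) (Real.exp_pos u).le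
      rw [← Real.exp_add] at this
      rw [show u + (v - u) = v from by ring] at this; nlinarith
    nlinarith [mul_le_mul_of_nonneg_right h1 (sub_nonneg.2 h)]

lemma expHigh (u v : ℝ) :
    (Real.exp u - Real.exp v) * (u - v) ≤ Real.exp (max u v) * ((u - v) * (u - v)) := by
  rcases le_total v u with h | h
  · rw [max_eq_left h]
    have h1 : Real.exp u - Real.exp v ≤ Real.exp u * (u - v) := by
      have := mul_le_mul_of_nonneg_left (Real.add_one_le_exp (v - u)) (Real.exp_pos u).le
      rw [← Real.exp_add] at this
      rw [show u + (v - u) = v from by ring] at this; nlinarith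
    nlinarith [mul_le_mul_of_nonneg_right h1 (sub_nonneg.2 h)]
  · rw [max_eq_right h]
    have h1 : Real.exp v - Real.exp u ≤ Real.exp v * (v - u) := by
      have := mul_le_mul_of_nonneg_left (Real.add_one_le_exp (u - v)) (Real.exp_pos v).le
      rw [← Real.exp_add] at this
      rw [show v + (u - v) = u from by ring] at this; nlinarith
    nlinarith [mul_le_mul_of_nonneg_right h1 (sub_nonneg.2 h)]

lemma symId {n : ℕ} (a f g : Fin n → ℝ) :
    2 * ((∑ j, a j * f j * g j) * (∑ j, a j) - (∑ j, a j * f j) * (∑ j, a j * g j)) =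
    ∑ j, ∑ k, a j * a k * (f j - f k) * (g j - g k) := by
  have h1 : ∀ j : Fin n, ∑ k, a j * a k * (f j - f k) * (g j - g k)
      = (a j * f j * g j) * (∑ k, a k) + a j * (∑ k, a k * f k * g k)
        - (a j * f j) * (∑ k, a k * g k) - (a j * g j) * (∑ k, a k * f k) := by
    intro j
    simp only [Finset.mul_sum, ← Finset.sum_add_distrib, ← Finset.sum_sub_distrib]
    exact Finset.sum_congr rfl fun k _ => by ring
  rw [Finset.sum_congr rfl fun j _ => h1 j]
  simp only [Finset.sum_add_distrib, Finset.sum_sub_distrib, ← Finset.sum_mul]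
  ring

section PerT
variable {n : ℕ} {a x u : Fin n → ℝ} {η : ℝ}

lemma C_le_bound (ha : ∀ j, 0 ≤ a j) (hx : ∀ j k, |x j - x k| ≤ η) (j0 : Fin n) :
    ∑ j, a j * Real.exp (x j) ≤ (∑ j, a j) * Real.exp (x j0 + η) := by
  rw [Finset.sum_mul]
  refine Finset.sum_le_sum fun j _ => ?_
  have h1 : x j ≤ x j0 + η := by
    have := hx j j0; rw [abs_le] at this; linarith [this.2]
  exact mul_le_mul_of_nonneg_left (Real.exp_le_exp.2 h1) (ha j)

lemma C_ge_bound (ha : ∀ j, 0 ≤ a j) (hx : ∀ j k, |x j - x k| ≤ η) (j0 : Fin n) :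
    (∑ j, a j) * Real.exp (x j0 - η) ≤ ∑ j, a j * Real.exp (x j) := by
  rw [Finset.sum_mul]
  refine Finset.sum_le_sum fun j _ => ?_
  have h1 : x j0 - η ≤ x j := by
    have := hx j0 j; rw [abs_le] at this; linarith [this.2]
  exact mul_le_mul_of_nonneg_left (Real.exp_le_exp.2 h1) (ha j)

lemma C_pos (ha : ∀ j, 0 ≤ a j) (hA : 0 < ∑ j, a j) :
    0 < ∑ j, a j * Real.exp (x j) := by
  obtain ⟨j, hj⟩ : ∃ j, 0 < a j := by
    by_contra h
    push_neg at h
    have : (∑ j, a j) ≤ 0 := Finset.sum_nonpos fun j _ => h j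
    linarith
  exact Finset.sum_pos' (fun k _ => mul_nonneg (ha k) (Real.exp_pos _).le)
    ⟨j, Finset.mem_univ j, mul_pos hj (Real.exp_pos _)⟩

lemma meanVar_bounds (ha : ∀ j, 0 ≤ a j) (hx : ∀ j k, |x j - x k| ≤ η)
    (hA : 0 < ∑ j, a j) :
    Real.exp (-η) * ((∑ j, a j * x j * x j) / (∑ j, a j)
        - ((∑ j, a j * x j) / (∑ j, a j))^2)
      ≤ (∑ j, a j * Real.exp (x j) * x j) / (∑ j, a j * Real.exp (x j))
        - (∑ j, a j * x j) / (∑ j, a j)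
    ∧ (∑ j, a j * Real.exp (x j) * x j) / (∑ j, a j * Real.exp (x j))
        - (∑ j, a j * x j) / (∑ j, a j)
      ≤ Real.exp η * ((∑ j, a j * x j * x j) / (∑ j, a j)
        - ((∑ j, a j * x j) / (∑ j, a j))^2) := by
  set A := ∑ j, a j with hAdef
  set C := ∑ j, a j * Real.exp (x j) with hCdef
  set Sx := ∑ j, a j * x j with hSx
  set Sxx := ∑ j, a j * x j * x j with hSxx
  set Scx := ∑ j, a j * Real.exp (x j) * x j with hScx
  have hC : 0 < C := C_pos ha hA
  set Q := ∑ j, ∑ k, a j * a k * (x j - x k) * (x j - x k) with hQ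
  set N := ∑ j, ∑ k, a j * a k * (Real.exp (x j) - Real.exp (x k)) * (x j - x k) with hN
  have I1 : 2 * (Sxx * A - Sx * Sx) = Q := symId a x x
  have I2 : 2 * (Scx * A - C * Sx) = N := by
    have := symId a (fun j => Real.exp (x j)) x
    simpa [hScx, hCdef, hSx] using this
  have B1 : Real.exp (-η) * C * Q ≤ A * N := by
    rw [hQ, hN]
    simp only [Finset.mul_sum]
    refine Finset.sum_le_sum fun j _ => Finset.sum_le_sum fun k _ => ?_
    have hm : C ≤ A * Real.exp (min (x j) (x k) + η) := by
      rcases le_total (x j) (x k) with h | h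
      · rw [min_eq_left h]; exact C_le_bound ha hx j
      · rw [min_eq_right h]; exact C_le_bound ha hx k
    have w0 : 0 ≤ a j * a k * ((x j - x k) * (x j - x k)) :=
      mul_nonneg (mul_nonneg (ha j) (ha k)) (mul_self_nonneg _)
    have hl := expLow (x j) (x k)
    have hE : Real.exp (-η) * Real.exp (min (x j) (x k) + η) = Real.exp (min (x j) (x k)) := by
      rw [← Real.exp_add]; ring_nf
    calc Real.exp (-η) * C * (a j * a k * (x j - x k) * (x j - x k))
        ≤ Real.exp (-η) * (A * Real.exp (min (x j) (x k) + η))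
            * (a j * a k * (x j - x k) * (x j - x k)) := by
          have := mul_le_mul_of_nonneg_left hm (Real.exp_nonneg (-η))
          have h2 : 0 ≤ a j * a k * (x j - x k) * (x j - x k) := by
            rw [mul_assoc]; exact w0
          exact mul_le_mul_of_nonneg_right this h2
      _ = A * (a j * a k) * (Real.exp (min (x j) (x k)) * ((x j - x k) * (x j - x k))) := by
          rw [show Real.exp (-η) * (A * Real.exp (min (x j) (x k) + η))
              = A * (Real.exp (-η) * Real.exp (min (x j) (x k) + η)) from by ring, hE]
          ring
      _ ≤ A * (a j * a k) * ((Real.exp (x j) - Real.exp (x k)) * (x j - x k)) :=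
          mul_le_mul_of_nonneg_left hl (mul_nonneg hA.le (mul_nonneg (ha j) (ha k)))
      _ = A * (a j * a k * (Real.exp (x j) - Real.exp (x k)) * (x j - x k)) := by ring
  have B2 : A * N ≤ Real.exp η * C * Q := by
    rw [hQ, hN]
    simp only [Finset.mul_sum]
    refine Finset.sum_le_sum fun j _ => Finset.sum_le_sum fun k _ => ?_
    have hM : A * Real.exp (max (x j) (x k) - η) ≤ C := by
      rcases le_total (x j) (x k) with h | h
      · rw [max_eq_right h]; exact C_ge_bound ha hx k
      · rw [max_eq_left h]; exact C_ge_bound ha hx j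
    have w0 : 0 ≤ a j * a k * ((x j - x k) * (x j - x k)) :=
      mul_nonneg (mul_nonneg (ha j) (ha k)) (mul_self_nonneg _)
    have hh := expHigh (x j) (x k)
    have hE : Real.exp (max (x j) (x k) - η) * Real.exp η = Real.exp (max (x j) (x k)) := by
      rw [← Real.exp_add]; ring_nf
    calc A * (a j * a k * (Real.exp (x j) - Real.exp (x k)) * (x j - x k))
        = A * (a j * a k) * ((Real.exp (x j) - Real.exp (x k)) * (x j - x k)) := by ring
      _ ≤ A * (a j * a k) * (Real.exp (max (x j) (x k)) * ((x j - x k) * (x j - x k))) :=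
          mul_le_mul_of_nonneg_left hh (mul_nonneg hA.le (mul_nonneg (ha j) (ha k)))
      _ = (A * Real.exp (max (x j) (x k) - η)) * (Real.exp η * (a j * a k
            * ((x j - x k) * (x j - x k)))) := by
          rw [← hE]; ring
      _ ≤ C * (Real.exp η * (a j * a k * ((x j - x k) * (x j - x k)))) := by
          refine mul_le_mul_of_nonneg_right hM ?_
          exact mul_nonneg (Real.exp_nonneg _) w0
      _ = Real.exp η * C * (a j * a k * (x j - x k) * (x j - x k)) := by ring
  have e1 : Sxx / A - (Sx / A)^2 = Q / (2 * (A * A)) := by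
    rw [← I1]; field_simp
  have e2 : Scx / C - Sx / A = N / (2 * (A * C)) := by
    rw [← I2]; field_simp
  constructor
  · rw [e1, e2, mul_div_assoc' (Real.exp (-η)) Q, div_le_div_iff₀ (by positivity) (by positivity)]
    nlinarith [mul_le_mul_of_nonneg_left B1 (by linarith : (0:ℝ) ≤ 2 * A)]
  · rw [e1, e2, mul_div_assoc' (Real.exp η) Q, div_le_div_iff₀ (by positivity) (by positivity)]
    nlinarith [mul_le_mul_of_nonneg_left B2 (by linarith : (0:ℝ) ≤ 2 * A)]

lemma var_compare (ha : ∀ j, 0 ≤ a j) (hx : ∀ j k, |x j - x k| ≤ η)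
    (hA : 0 < ∑ j, a j) :
    Real.exp (-(2*η)) * ((∑ j, a j * u j * u j) / (∑ j, a j)
        - ((∑ j, a j * u j) / (∑ j, a j))^2)
      ≤ (∑ j, a j * Real.exp (x j) * u j * u j) / (∑ j, a j * Real.exp (x j))
        - ((∑ j, a j * Real.exp (x j) * u j) / (∑ j, a j * Real.exp (x j)))^2
    ∧ (∑ j, a j * Real.exp (x j) * u j * u j) / (∑ j, a j * Real.exp (x j))
        - ((∑ j, a j * Real.exp (x j) * u j) / (∑ j, a j * Real.exp (x j)))^2
      ≤ Real.exp (2*η) * ((∑ j, a j * u j * u j) / (∑ j, a j)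
        - ((∑ j, a j * u j) / (∑ j, a j))^2) := by
  set c : Fin n → ℝ := fun j => a j * Real.exp (x j) with hc
  set A := ∑ j, a j with hAdef
  have hC : 0 < ∑ j, c j := C_pos ha hA
  set C := ∑ j, c j with hCdef
  set Qa := ∑ j, ∑ k, a j * a k * (u j - u k) * (u j - u k) with hQa
  set Qc := ∑ j, ∑ k, c j * c k * (u j - u k) * (u j - u k) with hQc
  have Ia : 2 * ((∑ j, a j * u j * u j) * A - (∑ j, a j * u j) * (∑ j, a j * u j)) = Qa :=
    symId a u u
  have Ic : 2 * ((∑ j, c j * u j * u j) * C - (∑ j, c j * u j) * (∑ j, c j * u j)) = Qc :=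
    symId c u u
  have hCnn : 0 ≤ C := hC.le
  have B3 : Real.exp (-(2*η)) * (C * C) * Qa ≤ (A * A) * Qc := by
    rw [hQa, hQc]
    simp only [Finset.mul_sum]
    refine Finset.sum_le_sum fun j _ => Finset.sum_le_sum fun k _ => ?_
    have hm1 : C ≤ A * Real.exp (x j + η) := C_le_bound ha hx j
    have hm2 : C ≤ A * Real.exp (x k + η) := C_le_bound ha hx k
    have hCC : C * C ≤ (A * Real.exp (x j + η)) * (A * Real.exp (x k + η)) :=
      mul_le_mul hm1 hm2 hCnn (le_trans hCnn hm1)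
    have w0 : 0 ≤ a j * a k * ((u j - u k) * (u j - u k)) :=
      mul_nonneg (mul_nonneg (ha j) (ha k)) (mul_self_nonneg _)
    have step : Real.exp (-(2*η)) * (C * C) * (a j * a k * (u j - u k) * (u j - u k))
        ≤ Real.exp (-(2*η)) * ((A * Real.exp (x j + η)) * (A * Real.exp (x k + η)))
          * (a j * a k * (u j - u k) * (u j - u k)) := by
      refine mul_le_mul_of_nonneg_right
        (mul_le_mul_of_nonneg_left hCC (Real.exp_nonneg _)) ?_
      rw [mul_assoc]; exact w0
    refine le_trans step (le_of_eq ?_)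
    have hE : Real.exp (-(2*η)) * (Real.exp (x j + η) * Real.exp (x k + η))
        = Real.exp (x j) * Real.exp (x k) := by
      rw [← Real.exp_add, ← Real.exp_add, ← Real.exp_add]; ring_nf
    simp only [hc]
    linear_combination (A * A * (a j * a k) * ((u j - u k) * (u j - u k))) * hE
  have B4 : (A * A) * Qc ≤ Real.exp (2*η) * (C * C) * Qa := by
    rw [hQa, hQc]
    simp only [Finset.mul_sum]
    refine Finset.sum_le_sum fun j _ => Finset.sum_le_sum fun k _ => ?_
    have hg1 : A * Real.exp (x j - η) ≤ C := C_ge_bound ha hx j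
    have hg2 : A * Real.exp (x k - η) ≤ C := C_ge_bound ha hx k
    have hAe2 : 0 ≤ A * Real.exp (x k - η) := mul_nonneg hA.le (Real.exp_nonneg _)
    have hCC : (A * Real.exp (x j - η)) * (A * Real.exp (x k - η)) ≤ C * C :=
      mul_le_mul hg1 hg2 hAe2 hCnn
    have w0 : 0 ≤ a j * a k * ((u j - u k) * (u j - u k)) :=
      mul_nonneg (mul_nonneg (ha j) (ha k)) (mul_self_nonneg _)
    have step : Real.exp (2*η) * ((A * Real.exp (x j - η)) * (A * Real.exp (x k - η)))
          * (a j * a k * (u j - u k) * (u j - u k))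
        ≤ Real.exp (2*η) * (C * C) * (a j * a k * (u j - u k) * (u j - u k)) := by
      refine mul_le_mul_of_nonneg_right
        (mul_le_mul_of_nonneg_left hCC (Real.exp_nonneg _)) ?_
      rw [mul_assoc]; exact w0
    refine le_trans (le_of_eq ?_) step
    have hE : Real.exp (2*η) * (Real.exp (x j - η) * Real.exp (x k - η))
        = Real.exp (x j) * Real.exp (x k) := by
      rw [← Real.exp_add, ← Real.exp_add, ← Real.exp_add]; ring_nf
    simp only [hc]
    linear_combination (-(A * A * (a j * a k) * ((u j - u k) * (u j - u k)))) * hE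
  have ea : (∑ j, a j * u j * u j) / A - ((∑ j, a j * u j) / A)^2 = Qa / (2 * (A * A)) := by
    rw [← Ia]; field_simp
  have ec : (∑ j, c j * u j * u j) / C - ((∑ j, c j * u j) / C)^2 = Qc / (2 * (C * C)) := by
    rw [← Ic]; field_simp
  have hshape1 : (∑ j, a j * Real.exp (x j) * u j * u j) = ∑ j, c j * u j * u j := rfl
  have hshape2 : (∑ j, a j * Real.exp (x j) * u j) = ∑ j, c j * u j := rfl
  rw [hshape1, hshape2, ea, ec]
  constructor
  · rw [mul_div_assoc' (Real.exp (-(2*η))) Qa, div_le_div_iff₀ (by positivity) (by positivity)]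
    nlinarith [mul_le_mul_of_nonneg_left B3 (by norm_num : (0:ℝ) ≤ 2)]
  · rw [mul_div_assoc' (Real.exp (2*η)) Qa, div_le_div_iff₀ (by positivity) (by positivity)]
    nlinarith [mul_le_mul_of_nonneg_left B4 (by norm_num : (0:ℝ) ≤ 2)]

end PerT

/-! ### quadForm helper lemmas -/

namespace CoxAux
variable {d : ℕ}

lemma quadForm_sub (M N : Matrix (Fin d) (Fin d) ℝ) (y : EuclideanSpace ℝ (Fin d)) :
    quadForm (M - N) y = quadForm M y - quadForm N y := by
  simp only [quadForm, Matrix.sub_apply, ← Finset.sum_sub_distrib]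
  exact Finset.sum_congr rfl fun k _ => Finset.sum_congr rfl fun l _ => by ring

lemma quadForm_smul (r : ℝ) (M : Matrix (Fin d) (Fin d) ℝ) (y : EuclideanSpace ℝ (Fin d)) :
    quadForm (r • M) y = r * quadForm M y := by
  simp only [quadForm, Matrix.smul_apply, smul_eq_mul, Finset.mul_sum]
  exact Finset.sum_congr rfl fun k _ => Finset.sum_congr rfl fun l _ => by ring

lemma quadForm_sum {ι : Type*} (s : Finset ι) (f : ι → Matrix (Fin d) (Fin d) ℝ)
    (y : EuclideanSpace ℝ (Fin d)) :
    quadForm (∑ i ∈ s, f i) y = ∑ i ∈ s, quadForm (f i) y := by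
  unfold quadForm
  calc ∑ k, ∑ l, y k * (∑ i ∈ s, f i) k l * y l
      = ∑ k, ∑ l, ∑ i ∈ s, y k * f i k l * y l := by
        refine Finset.sum_congr rfl fun k _ => Finset.sum_congr rfl fun l _ => ?_
        rw [Matrix.sum_apply, Finset.mul_sum, Finset.sum_mul]
    _ = ∑ k, ∑ i ∈ s, ∑ l, y k * f i k l * y l := by
        exact Finset.sum_congr rfl fun k _ => Finset.sum_comm
    _ = ∑ i ∈ s, ∑ k, ∑ l, y k * f i k l * y l := Finset.sum_comm

lemma quadForm_zero (y : EuclideanSpace ℝ (Fin d)) :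
    quadForm (0 : Matrix (Fin d) (Fin d) ℝ) y = 0 := by
  simp [quadForm]

lemma quadForm_ite (c : Prop) [Decidable c] (M : Matrix (Fin d) (Fin d) ℝ)
    (y : EuclideanSpace ℝ (Fin d)) :
    quadForm (if c then M else 0) y = if c then quadForm M y else 0 := by
  split <;> simp [quadForm]

lemma quadForm_of (v y : EuclideanSpace ℝ (Fin d)) :
    quadForm (Matrix.of fun k l => v k * v l) y = (∑ k, y k * v k) * (∑ k, y k * v k) := by
  simp only [quadForm, Matrix.of_apply, Finset.sum_mul_sum]
  exact Finset.sum_congr rfl fun k _ => Finset.sum_congr rfl fun l _ => by ring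

lemma inner_eq_sum (y v : EuclideanSpace ℝ (Fin d)) : ⟪y, v⟫ = ∑ k, y k * v k := by
  simp [PiLp.inner_apply, RCLike.inner_apply, conj_trivial]
  exact Finset.sum_congr rfl fun k _ => mul_comm _ _

end CoxAux

namespace CoxAux2
open CoxAux
variable {n d : ℕ}

lemma inner_S1 (D : SurvData n d) (β u : EuclideanSpace ℝ (Fin d)) (t : ℝ) :
    ⟪u, D.S1 β t⟫ = (n:ℝ)⁻¹ *
      ∑ j, (if t ≤ D.T j then Real.exp ⟪β, D.Z j t⟫ else 0) * ⟪u, D.Z j t⟫ := by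
  unfold SurvData.S1
  rw [real_inner_smul_right, inner_sum]
  congr 1
  refine Finset.sum_congr rfl fun j _ => ?_
  split
  · rw [real_inner_smul_right]
  · rw [inner_zero_right, zero_mul]

lemma inner_Zbar (D : SurvData n d) (β u : EuclideanSpace ℝ (Fin d)) (t : ℝ)
    (hn : (n:ℝ) ≠ 0) :
    ⟪u, D.Zbar β t⟫ = (∑ j, if t ≤ D.T j then Real.exp ⟪β, D.Z j t⟫ else 0)⁻¹ *
      ∑ j, (if t ≤ D.T j then Real.exp ⟪β, D.Z j t⟫ else 0) * ⟪u, D.Z j t⟫ := by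
  unfold SurvData.Zbar
  rw [real_inner_smul_right, inner_S1]
  unfold SurvData.S0
  set W := ∑ j, if t ≤ D.T j then Real.exp ⟪β, D.Z j t⟫ else 0
  set Ssum := ∑ j, (if t ≤ D.T j then Real.exp ⟪β, D.Z j t⟫ else 0) * ⟪u, D.Z j t⟫
  rw [mul_inv, inv_inv]
  rw [show (n:ℝ) * W⁻¹ * ((n:ℝ)⁻¹ * Ssum) = ((n:ℝ) * (n:ℝ)⁻¹) * (W⁻¹ * Ssum) from by ring,
    mul_inv_cancel₀ hn, one_mul]

lemma quadForm_S2 (D : SurvData n d) (β y : EuclideanSpace ℝ (Fin d)) (t : ℝ) :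
    quadForm (D.S2mat β t) y = (n:ℝ)⁻¹ *
      ∑ j, (if t ≤ D.T j then Real.exp ⟪β, D.Z j t⟫ else 0)
        * (⟪y, D.Z j t⟫ * ⟪y, D.Z j t⟫) := by
  unfold SurvData.S2mat
  rw [quadForm_smul, quadForm_sum]
  congr 1
  refine Finset.sum_congr rfl fun j _ => ?_
  rw [quadForm_ite]
  split
  · rw [quadForm_smul, quadForm_of, ← inner_eq_sum]
  · rw [zero_mul]

lemma quadForm_Vmat (D : SurvData n d) (β y : EuclideanSpace ℝ (Fin d)) (t : ℝ)
    (hn : (n:ℝ) ≠ 0) :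
    quadForm (D.Vmat β t) y =
      (∑ j, (if t ≤ D.T j then Real.exp ⟪β, D.Z j t⟫ else 0) * ⟪y, D.Z j t⟫ * ⟪y, D.Z j t⟫) /
        (∑ j, if t ≤ D.T j then Real.exp ⟪β, D.Z j t⟫ else 0)
      - ((∑ j, (if t ≤ D.T j then Real.exp ⟪β, D.Z j t⟫ else 0) * ⟪y, D.Z j t⟫) /
        (∑ j, if t ≤ D.T j then Real.exp ⟪β, D.Z j t⟫ else 0))^2 := by
  unfold SurvData.Vmat
  rw [quadForm_sub, quadForm_smul, quadForm_S2, quadForm_of]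
  have hz : (∑ k, y k * D.Zbar β t k)
      = (∑ j, if t ≤ D.T j then Real.exp ⟪β, D.Z j t⟫ else 0)⁻¹ *
        ∑ j, (if t ≤ D.T j then Real.exp ⟪β, D.Z j t⟫ else 0) * ⟪y, D.Z j t⟫ := by
    rw [← inner_eq_sum y (D.Zbar β t), inner_Zbar D β y t hn]
  rw [hz]
  unfold SurvData.S0
  set W := ∑ j, if t ≤ D.T j then Real.exp ⟪β, D.Z j t⟫ else 0 with hW
  have h1 : ((n:ℝ)⁻¹ * W)⁻¹ * ((n:ℝ)⁻¹ *
      (∑ j, (if t ≤ D.T j then Real.exp ⟪β, D.Z j t⟫ else 0)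
        * (⟪y, D.Z j t⟫ * ⟪y, D.Z j t⟫)))
      = W⁻¹ * (∑ j, (if t ≤ D.T j then Real.exp ⟪β, D.Z j t⟫ else 0)
        * (⟪y, D.Z j t⟫ * ⟪y, D.Z j t⟫)) := by
    rw [mul_inv, inv_inv]
    rw [show ∀ S : ℝ, (n:ℝ) * W⁻¹ * ((n:ℝ)⁻¹ * S) = ((n:ℝ) * (n:ℝ)⁻¹) * (W⁻¹ * S) from
      fun S => by ring, mul_inv_cancel₀ hn, one_mul]
  rw [h1]
  rw [show (∑ j, (if t ≤ D.T j then Real.exp ⟪β, D.Z j t⟫ else 0)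
        * (⟪y, D.Z j t⟫ * ⟪y, D.Z j t⟫))
      = ∑ j, (if t ≤ D.T j then Real.exp ⟪β, D.Z j t⟫ else 0)
        * ⟪y, D.Z j t⟫ * ⟪y, D.Z j t⟫ from
    Finset.sum_congr rfl fun j _ => by ring]
  rw [div_eq_inv_mul, div_eq_inv_mul]
  ring

lemma score_inner (D : SurvData n d) (β β' b : EuclideanSpace ℝ (Fin d)) :
    ⟪b, D.score β - D.score β'⟫ = (n:ℝ)⁻¹ *
      ∑ i, (if D.Δ i then ⟪b, D.Zbar β' (D.T i)⟫ - ⟪b, D.Zbar β (D.T i)⟫ else 0) := by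
  rw [inner_sub_right]
  unfold SurvData.score
  rw [real_inner_smul_right, real_inner_smul_right, inner_sum, inner_sum, ← mul_sub,
    ← Finset.sum_sub_distrib]
  congr 1
  refine Finset.sum_congr rfl fun i _ => ?_
  split
  · rw [inner_sub_right, inner_sub_right]; ring
  · rw [inner_zero_right, sub_zero]

lemma quadForm_info (D : SurvData n d) (β y : EuclideanSpace ℝ (Fin d)) :
    quadForm (D.infoMat β) y = (n:ℝ)⁻¹ *
      ∑ i, (if D.Δ i then quadForm (D.Vmat β (D.T i)) y else 0) := by
  unfold SurvData.infoMat
  rw [quadForm_smul, quadForm_sum]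
  congr 1
  exact Finset.sum_congr rfl fun i _ => quadForm_ite _ _ _

lemma Vmat_symm (D : SurvData n d) (β : EuclideanSpace ℝ (Fin d)) (t : ℝ) (k l : Fin d) :
    D.Vmat β t k l = D.Vmat β t l k := by
  unfold SurvData.Vmat SurvData.S2mat
  simp only [Matrix.sub_apply, Matrix.smul_apply, Matrix.of_apply, Matrix.sum_apply,
    smul_eq_mul]
  have h : ∀ j : Fin n, (if t ≤ D.T j then
        Real.exp ⟪β, D.Z j t⟫ • Matrix.of (fun k l => D.Z j t k * D.Z j t l) else 0) k l
      = (if t ≤ D.T j then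
        Real.exp ⟪β, D.Z j t⟫ • Matrix.of (fun k l => D.Z j t k * D.Z j t l) else 0) l k := by
    intro j
    split
    · simp only [Matrix.smul_apply, Matrix.of_apply, smul_eq_mul]; ring
    · rfl
  rw [Finset.sum_congr rfl fun j _ => h j]
  ring

lemma infoMat_herm (D : SurvData n d) (β : EuclideanSpace ℝ (Fin d)) :
    (D.infoMat β).IsHermitian := by
  rw [Matrix.IsHermitian]
  ext k l
  rw [Matrix.conjTranspose_apply, star_trivial]
  unfold SurvData.infoMat
  simp only [Matrix.smul_apply, Matrix.sum_apply, smul_eq_mul]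
  congr 1
  refine Finset.sum_congr rfl fun i _ => ?_
  split
  · exact Vmat_symm D β (D.T i) l k
  · rfl

lemma dot_quad (M : Matrix (Fin d) (Fin d) ℝ) (y : Fin d → ℝ) :
    dotProduct (star y) (M.mulVec y) = quadForm M (WithLp.toLp 2 y) := by
  simp only [star_trivial, dotProduct, PiLp.toLp_apply, Matrix.mulVec, quadForm, Finset.mul_sum]
  exact Finset.sum_congr rfl fun k _ => Finset.sum_congr rfl fun l _ => by ring

/-! ### per-time-point bridging lemmas -/

lemma per_t_score (D : SurvData n d) (β b : EuclideanSpace ℝ (Fin d)) (η t : ℝ)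
    (hn : (n:ℝ) ≠ 0)
    (hx : ∀ j k : Fin n, |⟪b, D.Z j t⟫ - ⟪b, D.Z k t⟫| ≤ η)
    (hA : 0 < ∑ j, if t ≤ D.T j then Real.exp ⟪β, D.Z j t⟫ else 0) :
    Real.exp (-η) * quadForm (D.Vmat β t) b ≤ ⟪b, D.Zbar (β + b) t⟫ - ⟪b, D.Zbar β t⟫ ∧
    ⟪b, D.Zbar (β + b) t⟫ - ⟪b, D.Zbar β t⟫ ≤ Real.exp η * quadForm (D.Vmat β t) b := by
  have hw' : ∀ j, (if t ≤ D.T j then Real.exp ⟪β + b, D.Z j t⟫ else 0)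
      = (if t ≤ D.T j then Real.exp ⟪β, D.Z j t⟫ else 0) * Real.exp ⟪b, D.Z j t⟫ := by
    intro j; split
    · rw [inner_add_left, Real.exp_add]
    · rw [zero_mul]
  have h1 : (∑ j, if t ≤ D.T j then Real.exp ⟪β + b, D.Z j t⟫ else 0)
      = ∑ j, (if t ≤ D.T j then Real.exp ⟪β, D.Z j t⟫ else 0) * Real.exp ⟪b, D.Z j t⟫ :=
    Finset.sum_congr rfl fun j _ => hw' j
  have h2 : (∑ j, (if t ≤ D.T j then Real.exp ⟪β + b, D.Z j t⟫ else 0) * ⟪b, D.Z j t⟫)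
      = ∑ j, (if t ≤ D.T j then Real.exp ⟪β, D.Z j t⟫ else 0) * Real.exp ⟪b, D.Z j t⟫
          * ⟪b, D.Z j t⟫ :=
    Finset.sum_congr rfl fun j _ => by rw [hw' j]
  have key := meanVar_bounds
    (a := fun j => if t ≤ D.T j then Real.exp ⟪β, D.Z j t⟫ else 0)
    (x := fun j => ⟪b, D.Z j t⟫)
    (fun j => by split; exacts [(Real.exp_pos _).le, le_rfl]) hx hA
  rw [quadForm_Vmat D β b t hn, inner_Zbar D (β + b) b t hn, inner_Zbar D β b t hn, h1, h2]
  simp only [inv_mul_eq_div]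
  exact key

lemma per_t_var (D : SurvData n d) (β b y : EuclideanSpace ℝ (Fin d)) (η t : ℝ)
    (hn : (n:ℝ) ≠ 0)
    (hx : ∀ j k : Fin n, |⟪b, D.Z j t⟫ - ⟪b, D.Z k t⟫| ≤ η)
    (hA : 0 < ∑ j, if t ≤ D.T j then Real.exp ⟪β, D.Z j t⟫ else 0) :
    Real.exp (-(2*η)) * quadForm (D.Vmat β t) y ≤ quadForm (D.Vmat (β + b) t) y ∧
    quadForm (D.Vmat (β + b) t) y ≤ Real.exp (2*η) * quadForm (D.Vmat β t) y := by
  have hw' : ∀ j, (if t ≤ D.T j then Real.exp ⟪β + b, D.Z j t⟫ else 0)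
      = (if t ≤ D.T j then Real.exp ⟪β, D.Z j t⟫ else 0) * Real.exp ⟪b, D.Z j t⟫ := by
    intro j; split
    · rw [inner_add_left, Real.exp_add]
    · rw [zero_mul]
  have h1 : (∑ j, if t ≤ D.T j then Real.exp ⟪β + b, D.Z j t⟫ else 0)
      = ∑ j, (if t ≤ D.T j then Real.exp ⟪β, D.Z j t⟫ else 0) * Real.exp ⟪b, D.Z j t⟫ :=
    Finset.sum_congr rfl fun j _ => hw' j
  have h2 : (∑ j, (if t ≤ D.T j then Real.exp ⟪β + b, D.Z j t⟫ else 0)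
        * ⟪y, D.Z j t⟫ * ⟪y, D.Z j t⟫)
      = ∑ j, (if t ≤ D.T j then Real.exp ⟪β, D.Z j t⟫ else 0) * Real.exp ⟪b, D.Z j t⟫
          * ⟪y, D.Z j t⟫ * ⟪y, D.Z j t⟫ :=
    Finset.sum_congr rfl fun j _ => by rw [hw' j]
  have h3 : (∑ j, (if t ≤ D.T j then Real.exp ⟪β + b, D.Z j t⟫ else 0) * ⟪y, D.Z j t⟫)
      = ∑ j, (if t ≤ D.T j then Real.exp ⟪β, D.Z j t⟫ else 0) * Real.exp ⟪b, D.Z j t⟫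
          * ⟪y, D.Z j t⟫ :=
    Finset.sum_congr rfl fun j _ => by rw [hw' j]
  have key := var_compare
    (a := fun j => if t ≤ D.T j then Real.exp ⟪β, D.Z j t⟫ else 0)
    (x := fun j => ⟪b, D.Z j t⟫) (u := fun j => ⟪y, D.Z j t⟫)
    (fun j => by split; exacts [(Real.exp_pos _).le, le_rfl]) hx hA
  rw [quadForm_Vmat D β y t hn, quadForm_Vmat D (β + b) y t hn, h1, h2, h3]
  exact key

end CoxAux2

/-- Lemma B.3 (Huang et al.): with
`η_b = sup_{t ∈ [0,1]} max_{i,j} |bᵀ(Z_i(t) − Z_j(t))|` (finite, at most `2 C_Z ‖b‖₂`),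
`e^{−η_b} bᵀ H(β) b ≤ bᵀ(ℓ̇(β) − ℓ̇(β+b)) ≤ e^{η_b} bᵀ H(β) b` and, in the Loewner
order, `e^{−2η_b} H(β) ⪯ H(β+b) ⪯ e^{2η_b} H(β)`. -/
theorem cox_lemma_huang (CZ : ℝ) (hCZ : 0 < CZ) {n d : ℕ} (hn : 2 ≤ n)
    (D : SurvData n d) (hT : D.valid) (hZ : D.covBound CZ)
    (β b : EuclideanSpace ℝ (Fin d))
    (η : ℝ)
    (hη : η = sSup {x : ℝ | ∃ t ∈ Set.Icc (0 : ℝ) 1, ∃ i j : Fin n,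
      x = |⟪b, D.Z i t - D.Z j t⟫|}) :
    η ≤ 2 * CZ * ‖b‖ ∧
    Real.exp (-η) * quadForm (D.infoMat β) b ≤ ⟪b, D.score β - D.score (β + b)⟫ ∧
    ⟪b, D.score β - D.score (β + b)⟫ ≤ Real.exp η * quadForm (D.infoMat β) b ∧
    (D.infoMat (β + b) - Real.exp (-(2 * η)) • D.infoMat β).PosSemidef ∧
    (Real.exp (2 * η) • D.infoMat β - D.infoMat (β + b)).PosSemidef := by
  classical
  have hn0 : (n:ℝ) ≠ 0 := Nat.cast_ne_zero.2 (by omega)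
  have hbd : ∀ s ∈ {x : ℝ | ∃ t ∈ Set.Icc (0 : ℝ) 1, ∃ i j : Fin n,
      x = |⟪b, D.Z i t - D.Z j t⟫|}, s ≤ 2 * CZ * ‖b‖ := by
    rintro s ⟨t, ht, i, j, rfl⟩
    calc |⟪b, D.Z i t - D.Z j t⟫| ≤ ‖b‖ * ‖D.Z i t - D.Z j t‖ := abs_real_inner_le_norm _ _
      _ ≤ ‖b‖ * (‖D.Z i t‖ + ‖D.Z j t‖) :=
          mul_le_mul_of_nonneg_left (norm_sub_le _ _) (norm_nonneg b)
      _ ≤ ‖b‖ * (CZ + CZ) :=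
          mul_le_mul_of_nonneg_left (add_le_add (hZ i t ht) (hZ j t ht)) (norm_nonneg b)
      _ = 2 * CZ * ‖b‖ := by ring
  have hBdd : BddAbove {x : ℝ | ∃ t ∈ Set.Icc (0 : ℝ) 1, ∃ i j : Fin n,
      x = |⟪b, D.Z i t - D.Z j t⟫|} := ⟨2 * CZ * ‖b‖, hbd⟩
  have i0 : Fin n := ⟨0, by omega⟩
  have hne : Set.Nonempty {x : ℝ | ∃ t ∈ Set.Icc (0 : ℝ) 1, ∃ i j : Fin n,
      x = |⟪b, D.Z i t - D.Z j t⟫|} :=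
    ⟨|⟪b, D.Z i0 0 - D.Z i0 0⟫|, ⟨0, ⟨le_refl 0, zero_le_one⟩, i0, i0, rfl⟩⟩
  have hη1 : η ≤ 2 * CZ * ‖b‖ := by rw [hη]; exact csSup_le hne hbd
  have hmem : ∀ t ∈ Set.Icc (0:ℝ) 1, ∀ i j : Fin n, |⟪b, D.Z i t - D.Z j t⟫| ≤ η := by
    intro t ht i j; rw [hη]; exact le_csSup hBdd ⟨t, ht, i, j, rfl⟩
  have hx_bound : ∀ i : Fin n, ∀ j k : Fin n,
      |⟪b, D.Z j (D.T i)⟫ - ⟪b, D.Z k (D.T i)⟫| ≤ η := by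
    intro i j k
    have h := hmem (D.T i) (hT i) j k
    rwa [inner_sub_right] at h
  have hA_pos : ∀ i : Fin n,
      0 < ∑ j, if (D.T i) ≤ D.T j then Real.exp ⟪β, D.Z j (D.T i)⟫ else 0 := by
    intro i
    refine Finset.sum_pos' (fun j _ => ?_) ⟨i, Finset.mem_univ i, ?_⟩
    · split
      · exact (Real.exp_pos _).le
      · exact le_rfl
    · rw [if_pos (le_refl (D.T i))]
      exact Real.exp_pos _
  refine ⟨hη1, ?_, ?_, ?_, ?_⟩
  · -- score lower bound
    rw [CoxAux2.score_inner D β (β + b) b, CoxAux2.quadForm_info D β b]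
    rw [show Real.exp (-η) * ((n:ℝ)⁻¹ *
        ∑ i, (if D.Δ i then quadForm (D.Vmat β (D.T i)) b else 0))
      = (n:ℝ)⁻¹ * ∑ i, Real.exp (-η)
          * (if D.Δ i then quadForm (D.Vmat β (D.T i)) b else 0) from by
        rw [← Finset.mul_sum]; ring]
    refine mul_le_mul_of_nonneg_left (Finset.sum_le_sum fun i _ => ?_) (by positivity)
    by_cases hΔ : D.Δ i
    · rw [if_pos hΔ, if_pos hΔ]
      exact (CoxAux2.per_t_score D β b η (D.T i) hn0 (hx_bound i) (hA_pos i)).1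
    · rw [if_neg hΔ, if_neg hΔ, mul_zero]
  · -- score upper bound
    rw [CoxAux2.score_inner D β (β + b) b, CoxAux2.quadForm_info D β b]
    rw [show Real.exp η * ((n:ℝ)⁻¹ *
        ∑ i, (if D.Δ i then quadForm (D.Vmat β (D.T i)) b else 0))
      = (n:ℝ)⁻¹ * ∑ i, Real.exp η
          * (if D.Δ i then quadForm (D.Vmat β (D.T i)) b else 0) from by
        rw [← Finset.mul_sum]; ring]
    refine mul_le_mul_of_nonneg_left (Finset.sum_le_sum fun i _ => ?_) (by positivity)
    by_cases hΔ : D.Δ i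
    · rw [if_pos hΔ, if_pos hΔ]
      exact (CoxAux2.per_t_score D β b η (D.T i) hn0 (hx_bound i) (hA_pos i)).2
    · rw [if_neg hΔ, if_neg hΔ, mul_zero]
  · -- lower Loewner bound
    rw [Matrix.posSemidef_iff_dotProduct_mulVec]
    constructor
    · have hh1 := CoxAux2.infoMat_herm D (β + b)
      have hh2 := CoxAux2.infoMat_herm D β
      rw [Matrix.IsHermitian] at *
      rw [Matrix.conjTranspose_sub, Matrix.conjTranspose_smul, hh1, hh2, star_trivial]
    · intro y
      rw [CoxAux2.dot_quad, CoxAux.quadForm_sub, CoxAux.quadForm_smul, sub_nonneg,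
        CoxAux2.quadForm_info, CoxAux2.quadForm_info]
      rw [show Real.exp (-(2 * η)) * ((n:ℝ)⁻¹ *
          ∑ i, (if D.Δ i then quadForm (D.Vmat β (D.T i)) (WithLp.toLp 2 y) else 0))
        = (n:ℝ)⁻¹ * ∑ i, Real.exp (-(2 * η))
            * (if D.Δ i then quadForm (D.Vmat β (D.T i)) (WithLp.toLp 2 y) else 0) from by
          rw [← Finset.mul_sum]; ring]
      refine mul_le_mul_of_nonneg_left (Finset.sum_le_sum fun i _ => ?_) (by positivity)
      by_cases hΔ : D.Δ i
      · rw [if_pos hΔ, if_pos hΔ]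
        exact (CoxAux2.per_t_var D β b (WithLp.toLp 2 y) η (D.T i) hn0 (hx_bound i) (hA_pos i)).1
      · rw [if_neg hΔ, if_neg hΔ, mul_zero]
  · -- upper Loewner bound
    rw [Matrix.posSemidef_iff_dotProduct_mulVec]
    constructor
    · have hh1 := CoxAux2.infoMat_herm D (β + b)
      have hh2 := CoxAux2.infoMat_herm D β
      rw [Matrix.IsHermitian] at *
      rw [Matrix.conjTranspose_sub, Matrix.conjTranspose_smul, hh1, hh2, star_trivial]
    · intro y
      rw [CoxAux2.dot_quad, CoxAux.quadForm_sub, CoxAux.quadForm_smul, sub_nonneg,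
        CoxAux2.quadForm_info, CoxAux2.quadForm_info]
      rw [show Real.exp (2 * η) * ((n:ℝ)⁻¹ *
          ∑ i, (if D.Δ i then quadForm (D.Vmat β (D.T i)) (WithLp.toLp 2 y) else 0))
        = (n:ℝ)⁻¹ * ∑ i, Real.exp (2 * η)
            * (if D.Δ i then quadForm (D.Vmat β (D.T i)) (WithLp.toLp 2 y) else 0) from by
          rw [← Finset.mul_sum]; ring]
      refine mul_le_mul_of_nonneg_left (Finset.sum_le_sum fun i _ => ?_) (by positivity)
      by_cases hΔ : D.Δ i
      · rw [if_pos hΔ, if_pos hΔ]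
        exact (CoxAux2.per_t_var D β b (WithLp.toLp 2 y) η (D.T i) hn0 (hx_bound i) (hA_pos i)).2
      · rw [if_neg hΔ, if_neg hΔ, mul_zero]
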